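/- Let A, B : ℝ → ℝ be C¹ functions such that for every c ∈ ℝ either (A'(c) = 0 and B'(c) = 0) or B'(c)² < 2·A'(c). Define F : ℝ² → ℝ² by F(c,t) := ((A(c)/2)·t² + B(c)·t + c, t). Then F is injective and Ω := F(ℝ²) is an open subset of ℝ² containing the x-axis {(x,0) : x ∈ ℝ}. -/

import Mathlib

open ContinuousLinearMap in
/-- An explicit continuous linear equivalence `(x,y) ↦ (gc*x + gt*y, y)` for `gc ≠ 0`. -/
noncomputable def stmt7Equiv (gc gt : ℝ) (h : gc ≠ 0) : (ℝ × ℝ) ≃L[ℝ] (ℝ × ℝ) :=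
  ContinuousLinearEquiv.equivOfInverse
    ((gc • fst ℝ ℝ ℝ + gt • snd ℝ ℝ ℝ).prod (snd ℝ ℝ ℝ))
    ((gc⁻¹ • (fst ℝ ℝ ℝ - gt • snd ℝ ℝ ℝ)).prod (snd ℝ ℝ ℝ))
    (fun x => by
      simp only [prod_apply, coe_fst', coe_snd', add_apply, smul_apply, sub_apply,
        smul_eq_mul]
      refine Prod.ext ?_ rfl
      field_simp
      ring)
    (fun x => by
      simp only [prod_apply, coe_fst', coe_snd', add_apply, smul_apply, sub_apply,
        smul_eq_mul]
      refine Prod.ext ?_ rfl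
      field_simp
      ring)

lemma stmt7Equiv_coe (gc gt : ℝ) (h : gc ≠ 0) :
    (stmt7Equiv gc gt h : (ℝ × ℝ) →L[ℝ] (ℝ × ℝ)) =
      ((gc • ContinuousLinearMap.fst ℝ ℝ ℝ + gt • ContinuousLinearMap.snd ℝ ℝ ℝ).prod
        (ContinuousLinearMap.snd ℝ ℝ ℝ)) := rfl

lemma stmt7_pos (A B : ℝ → ℝ)
    (hcond : ∀ c : ℝ, (deriv A c = 0 ∧ deriv B c = 0) ∨ (deriv B c) ^ 2 < 2 * deriv A c)
    (c t : ℝ) : 0 < deriv A c / 2 * t ^ 2 + deriv B c * t + 1 := by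
  rcases hcond c with ⟨h1, h2⟩ | h
  · simp [h1, h2]
  · have hA' : 0 < deriv A c := by nlinarith [sq_nonneg (deriv B c)]
    nlinarith [sq_nonneg (deriv A c * t + deriv B c), mul_pos hA' hA']

theorem stmt7 (A B : ℝ → ℝ) (hA : ContDiff ℝ 1 A) (hB : ContDiff ℝ 1 B)
    (hcond : ∀ c : ℝ, (deriv A c = 0 ∧ deriv B c = 0) ∨ (deriv B c) ^ 2 < 2 * deriv A c)
    (F : ℝ × ℝ → ℝ × ℝ)
    (hF : ∀ c t : ℝ, F (c, t) = (A c / 2 * t ^ 2 + B c * t + c, t)) :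
    Function.Injective F ∧ IsOpen (Set.range F) ∧
      ∀ x : ℝ, (x, (0 : ℝ)) ∈ Set.range F := by
  have hFeq : F = fun p : ℝ × ℝ => (A p.1 / 2 * p.2 ^ 2 + B p.1 * p.2 + p.1, p.2) := by
    funext p
    obtain ⟨c, t⟩ := p
    exact hF c t
  -- strict monotonicity in c for fixed t
  have hmono : ∀ t : ℝ, StrictMono fun c => A c / 2 * t ^ 2 + B c * t + c := by
    intro t
    have hd : ∀ c : ℝ, HasDerivAt (fun c => A c / 2 * t ^ 2 + B c * t + c)
        (deriv A c / 2 * t ^ 2 + deriv B c * t + 1) c := by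
      intro c
      exact ((((hA.differentiable one_ne_zero c).hasDerivAt.div_const 2).mul_const
        (t ^ 2)).add ((hB.differentiable one_ne_zero c).hasDerivAt.mul_const t)).add
        (hasDerivAt_id c)
    refine strictMono_of_deriv_pos fun c => ?_
    rw [(hd c).deriv]
    exact stmt7_pos A B hcond c t
  -- injectivity
  have hinj : Function.Injective F := by
    intro p q hpq
    obtain ⟨c, t⟩ := p
    obtain ⟨c', t'⟩ := q
    rw [hF, hF] at hpq
    have h2 : t = t' := congrArg Prod.snd hpq
    subst h2
    have h1 : A c / 2 * t ^ 2 + B c * t + c = A c' / 2 * t ^ 2 + B c' * t + c' :=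
      congrArg Prod.fst hpq
    have := (hmono t).injective h1
    simp [this]
  -- openness via inverse function theorem
  have hopen : IsOpenMap F := by
    refine isOpenMap_of_hasStrictFDerivAt_equiv
      (f' := fun p : ℝ × ℝ => stmt7Equiv (deriv A p.1 / 2 * p.2 ^ 2 + deriv B p.1 * p.2 + 1)
        (A p.1 * p.2 + B p.1) (stmt7_pos A B hcond p.1 p.2).ne') (fun p => ?_)
    obtain ⟨c, t⟩ := p
    have hAc : HasStrictDerivAt A (deriv A c) c :=
      (hA.contDiffAt.hasStrictDerivAt one_ne_zero)
    have hBc : HasStrictDerivAt B (deriv B c) c :=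
      (hB.contDiffAt.hasStrictDerivAt one_ne_zero)
    have hA1 : HasStrictFDerivAt (fun p : ℝ × ℝ => A p.1)
        (deriv A c • ContinuousLinearMap.fst ℝ ℝ ℝ) (c, t) :=
      hAc.comp_hasStrictFDerivAt (c, t) hasStrictFDerivAt_fst
    have hB1 : HasStrictFDerivAt (fun p : ℝ × ℝ => B p.1)
        (deriv B c • ContinuousLinearMap.fst ℝ ℝ ℝ) (c, t) :=
      hBc.comp_hasStrictFDerivAt (c, t) hasStrictFDerivAt_fst
    have hsq : HasStrictFDerivAt (fun p : ℝ × ℝ => p.2 ^ 2)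
        (((2 : ℕ) * t ^ 1) • ContinuousLinearMap.snd ℝ ℝ ℝ) (c, t) :=
      (hasStrictDerivAt_pow 2 t).comp_hasStrictFDerivAt (f := Prod.snd) (c, t) hasStrictFDerivAt_snd
    have hf1 := (((hA1.mul_const (2:ℝ)⁻¹).mul hsq).add
      (hB1.mul hasStrictFDerivAt_snd)).add hasStrictFDerivAt_fst
    have hf := HasStrictFDerivAt.prodMk hf1 hasStrictFDerivAt_snd
    rw [hFeq]
    refine HasStrictFDerivAt.congr_fderiv hf ?_
    rw [stmt7Equiv_coe]
    refine ContinuousLinearMap.ext fun v => Prod.ext ?_ ?_ <;>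
      simp only [ContinuousLinearMap.prod_apply, ContinuousLinearMap.add_apply,
        ContinuousLinearMap.smul_apply, ContinuousLinearMap.coe_fst',
        ContinuousLinearMap.coe_snd', smul_eq_mul] <;> push_cast <;> ring
  refine ⟨hinj, hopen.isOpen_range, fun x => ⟨(x, 0), by rw [hF]; norm_num⟩⟩
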